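/- (Weak robustness.) Let A be an m×n real matrix, K ⊆ {1,…,n}, C > 1, and x ∈ ℝⁿ. Suppose that for every w ∈ ℝⁿ with Aw = 0 one has ‖x_K + w_K‖₁ + (1/C)·‖w_K̄‖₁ ≥ ‖x_K‖₁. Then every ℓ1 minimizer x̂ for (A, x) satisfies both ‖x_K‖₁ − ‖x̂_K‖₁ ≤ (2/(C−1))·‖x_K̄‖₁ and ‖(x − x̂)_K̄‖₁ ≤ (2C/(C−1))·‖x_K̄‖₁. -/
import Mathlib


/-- The ℓ1 norm of a vector in ℝⁿ. -/
noncomputable def l1 {n : ℕ} (x : Fin n → ℝ) : ℝ := ∑ i, |x i|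

/-- The restriction of a vector to the coordinates in `K` (zero outside `K`). -/
def restr {n : ℕ} (K : Finset (Fin n)) (x : Fin n → ℝ) : Fin n → ℝ :=
  fun i => if i ∈ K then x i else 0

lemma l1_split {n : ℕ} (K : Finset (Fin n)) (z : Fin n → ℝ) :
    l1 z = l1 (restr K z) + l1 (restr Kᶜ z) := by
  unfold l1 restr
  rw [← Finset.sum_add_distrib]
  refine Finset.sum_congr rfl fun i _ => ?_
  by_cases h : i ∈ K <;> simp [h, Finset.mem_compl]

lemma l1_triangle {n : ℕ} (a b : Fin n → ℝ) : l1 (a + b) ≤ l1 a + l1 b := by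
  unfold l1
  rw [← Finset.sum_add_distrib]
  exact Finset.sum_le_sum fun i _ => abs_add_le _ _

lemma l1_neg {n : ℕ} (a : Fin n → ℝ) : l1 (-a) = l1 a := by
  unfold l1; simp

lemma restr_add {n : ℕ} (K : Finset (Fin n)) (a b : Fin n → ℝ) :
    restr K (a + b) = restr K a + restr K b := by
  funext i; unfold restr; by_cases h : i ∈ K <;> simp [h]

lemma restr_neg {n : ℕ} (K : Finset (Fin n)) (a : Fin n → ℝ) :
    restr K (-a) = -restr K a := by
  funext i; unfold restr; by_cases h : i ∈ K <;> simp [h]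

theorem stmt_4 {m n : ℕ} (A : Matrix (Fin m) (Fin n) ℝ)
    (K : Finset (Fin n)) (C : ℝ) (hC : 1 < C) (x : Fin n → ℝ)
    (hcond : ∀ w : Fin n → ℝ, A.mulVec w = 0 →
      l1 (restr K x + restr K w) + (1 / C) * l1 (restr Kᶜ w) ≥ l1 (restr K x)) :
    ∀ xh : Fin n → ℝ, A.mulVec xh = A.mulVec x →
      (∀ z : Fin n → ℝ, A.mulVec z = A.mulVec x → l1 xh ≤ l1 z) →
      l1 (restr K x) - l1 (restr K xh) ≤ (2 / (C - 1)) * l1 (restr Kᶜ x) ∧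
      l1 (restr Kᶜ (x - xh)) ≤ (2 * C / (C - 1)) * l1 (restr Kᶜ x) := by
  intro xh hAxh hmin
  have hC0 : (0:ℝ) < C := by linarith
  have hC1 : (0:ℝ) < C - 1 := by linarith
  set w : Fin n → ℝ := xh - x with hw
  have hAw : A.mulVec w = 0 := by
    rw [hw, Matrix.mulVec_sub, hAxh, sub_self]
  have hxw : restr K x + restr K w = restr K xh := by
    rw [← restr_add]; congr 1; rw [hw]; ring
  have h1 := hcond w hAw
  rw [hxw] at h1
  set a := l1 (restr K x)
  set b := l1 (restr K xh)
  set c := l1 (restr Kᶜ x)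
  set d := l1 (restr Kᶜ xh)
  set e := l1 (restr Kᶜ w)
  -- minimality
  have hmin' : l1 xh ≤ l1 x := hmin x rfl
  rw [l1_split K xh, l1_split K x] at hmin'
  -- triangle : e ≤ d + c
  have htri : e ≤ d + c := by
    have : restr Kᶜ w = restr Kᶜ xh + restr Kᶜ (-x) := by
      rw [← restr_add, hw, sub_eq_add_neg]
    calc e = l1 (restr Kᶜ xh + restr Kᶜ (-x)) := by rw [← this]
    _ ≤ l1 (restr Kᶜ xh) + l1 (restr Kᶜ (-x)) := l1_triangle _ _
    _ = d + c := by rw [restr_neg, l1_neg]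
  -- from h1 : b + (1/C)*e ≥ a, multiply by C
  have h1' : C * (a - b) ≤ e := by
    have h2 : a - b ≤ (1/C) * e := by linarith
    have := mul_le_mul_of_nonneg_left h2 hC0.le
    calc C * (a - b) ≤ C * ((1/C) * e) := this
    _ = e := by field_simp
  have he : e * (C - 1) ≤ 2 * C * c := by
    nlinarith [mul_le_mul_of_nonneg_left htri hC0.le,
      mul_le_mul_of_nonneg_left hmin' hC0.le]
  constructor
  · rw [div_mul_eq_mul_div, le_div_iff₀ hC1]
    nlinarith
  · have hxe : l1 (restr Kᶜ (x - xh)) = e := by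
      have : x - xh = -w := by rw [hw]; ring
      rw [this, restr_neg, l1_neg]
    rw [hxe, div_mul_eq_mul_div, le_div_iff₀ hC1]
    linarith
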